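/- (Uniqueness part of the reconstruction theorem for singular modelled distributions, germ formulation.) Let (Λ₁^{(t)})_{t>0} and (Λ₂^{(t)})_{t>0} be families of continuous functions on ℝ^d such that, for each i ∈ {1,2}: Q_s Λ_i^{(t)} = Λ_i^{(t+s)} for all s, t > 0; sup_{0<t≤1} ‖Λ_i^{(t)}‖_{L∞(wv)} < ∞; and there is K ≥ 0 with (wv)(x) |Λ_i^{(t)}(x) − Q_t(x,F_x)| ≤ K t^{γ/ℓ} φ(x)^{η−γ} for all t ∈ (0,1] and all x with x₁ ≠ 0. Then Λ₁^{(t)} = Λ₂^{(t)} for every t > 0. -/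

import Mathlib

open MeasureTheory Set Filter Topology
open scoped ENNReal

noncomputable section

/-- The anisotropic norm `‖x‖_𝔰 = ∑ i, |x i| ^ (1 / 𝔰 i)`. -/
def sNorm {d : ℕ} (𝔰 : Fin (d + 1) → ℝ) (x : Fin (d + 1) → ℝ) : ℝ :=
  ∑ i, |x i| ^ (1 / 𝔰 i)

/-- The scaled degree `|k|_𝔰 = ∑ i, 𝔰 i * k i` of a multiindex `k`. -/
def sDeg {d : ℕ} (𝔰 : Fin (d + 1) → ℝ) (k : Fin (d + 1) → ℕ) : ℝ :=
  ∑ i, 𝔰 i * (k i : ℝ)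

/-- The rescaled function `G_t(x) = t^{-|𝔰|/ℓ} G(t^{-𝔰/ℓ} x)`. -/
def Gt {d : ℕ} (𝔰 : Fin (d + 1) → ℝ) (ℓ : ℝ) (G : (Fin (d + 1) → ℝ) → ℝ)
    (t : ℝ) (x : Fin (d + 1) → ℝ) : ℝ :=
  t ^ (-(∑ i, 𝔰 i) / ℓ) * G fun i => t ^ (-𝔰 i / ℓ) * x i

/-- The temporal weight `φ(x) = min(|x₁|^{1/𝔰₁}, 1)`. -/
def phi {d : ℕ} (𝔰 : Fin (d + 1) → ℝ) (x : Fin (d + 1) → ℝ) : ℝ :=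
  min (|x 0| ^ (1 / 𝔰 0)) 1

/-- `φ(x,y) = min(φ(x), φ(y))`. -/
def phi2 {d : ℕ} (𝔰 : Fin (d + 1) → ℝ) (x y : Fin (d + 1) → ℝ) : ℝ :=
  min (phi 𝔰 x) (phi 𝔰 y)

/-- The weighted sup norm `‖f‖_{L∞(u)} = sup_x |f x| * u x`, valued in `ℝ≥0∞`. -/
def wNorm {d : ℕ} (u f : (Fin (d + 1) → ℝ) → ℝ) : ℝ≥0∞ :=
  ⨆ x, ENNReal.ofReal (|f x| * u x)

/-- A `G`-controlled weight `w` with control function `wStar`. -/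
structure GControlled {d : ℕ} (𝔰 : Fin (d + 1) → ℝ) (ℓ : ℝ)
    (G : (Fin (d + 1) → ℝ) → ℝ) (w wStar : (Fin (d + 1) → ℝ) → ℝ) : Prop where
  cont : Continuous w
  pos : ∀ x, 0 < w x
  le_one : ∀ x, w x ≤ 1
  star_cont : Continuous wStar
  one_le_star : ∀ x, 1 ≤ wStar x
  submul : ∀ x y, w (x + y) ≤ wStar x * w y
  moment : ∀ n : ℝ, 0 ≤ n → ∀ T : ℝ, 0 < T → ∃ B : ℝ, ∀ t ∈ Set.Ioc (0 : ℝ) T,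
    ∀ x, sNorm 𝔰 x ^ n * wStar (fun i => t ^ (𝔰 i / ℓ) * x i) * G x ≤ B

/-- A `G`-type semigroup `Q`. -/
structure GSemigroup {d : ℕ} (𝔰 : Fin (d + 1) → ℝ) (ℓ : ℝ)
    (G : (Fin (d + 1) → ℝ) → ℝ)
    (Q : ℝ → (Fin (d + 1) → ℝ) → (Fin (d + 1) → ℝ) → ℝ) : Prop where
  cont : ∀ t : ℝ, 0 < t →
    Continuous fun p : (Fin (d + 1) → ℝ) × (Fin (d + 1) → ℝ) => Q t p.1 p.2
  semigroup : ∀ s t : ℝ, 0 < s → s < t → ∀ x y,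
    (∫ z, Q (t - s) x z * Q s z y) = Q t x y
  conservative : ∀ x, Tendsto (fun t => ∫ y, Q t x y) (𝓝[>] (0 : ℝ)) (𝓝 1)
  upper : ∃ C₁ : ℝ, 0 < C₁ ∧ ∀ t : ℝ, 0 < t → ∀ x y,
    |Q t x y| ≤ C₁ * Gt 𝔰 ℓ G t (x - y)
  timederiv : ∃ C₂ : ℝ, 0 < C₂ ∧ ∀ x y, ∀ t : ℝ, 0 < t → ∃ q : ℝ,
    HasDerivAt (fun s => Q s x y) q t ∧ |q| ≤ C₂ * t⁻¹ * Gt 𝔰 ℓ G t (x - y)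

/-! ### Auxiliary lemmas for the proof -/

section Aux

lemma aux_inv_le {A B C : ℝ} (hA : 0 < A) (hC : 0 < C) (h : A ≤ B * C) : C⁻¹ ≤ B * A⁻¹ := by
  have h' := mul_le_mul_of_nonneg_right h (mul_pos (inv_pos.2 hA) (inv_pos.2 hC)).le
  calc C⁻¹ = A * (A⁻¹ * C⁻¹) := by field_simp
  _ ≤ B * C * (A⁻¹ * C⁻¹) := h'
  _ = B * A⁻¹ := by field_simp

lemma aux_bound (c z : ℝ) (hc : 0 ≤ c) : min 1 (c * (z⁻¹)^2) ≤ (1+c) * (1+z^2)⁻¹ := by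
  rcases eq_or_ne z 0 with rfl | hz
  · simp only [inv_zero, ne_eq, OfNat.ofNat_ne_zero, not_false_eq_true, zero_pow, mul_zero]
    have : min (1:ℝ) 0 = 0 := by simp
    rw [this]; positivity
  · have hz2 : 0 < z^2 := by positivity
    have h12 : 0 < 1 + z^2 := by positivity
    have hinv : (z⁻¹)^2 = (z^2)⁻¹ := by rw [inv_pow]
    rcases le_total c (z^2) with h | h
    · refine le_trans (min_le_right _ _) ?_
      rw [hinv, ← div_eq_mul_inv (1+c), ← div_eq_mul_inv c, div_le_div_iff₀ hz2 h12]
      nlinarith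
    · refine le_trans (min_le_left _ _) ?_
      rw [← div_eq_mul_inv (1+c), le_div_iff₀ h12]
      nlinarith

lemma aux_min_nonneg (c z : ℝ) (hc : 0 ≤ c) : 0 ≤ min 1 (c * (z⁻¹)^2) :=
  le_min (by norm_num) (by positivity)

lemma aux_meas_min (c b : ℝ) : Measurable (fun r : ℝ => min 1 (c * ((b - r)⁻¹)^2)) := by
  fun_prop

lemma aux_int_min (c b : ℝ) (hc : 0 ≤ c) :
    Integrable (fun r : ℝ => min 1 (c * ((b - r)⁻¹)^2)) := by
  refine Integrable.mono' ((integrable_inv_one_add_sq.comp_sub_left b).const_mul (1+c))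
    (aux_meas_min c b).aestronglyMeasurable ?_
  filter_upwards with r
  rw [Real.norm_eq_abs, abs_of_nonneg (aux_min_nonneg c _ hc)]
  exact aux_bound c (b - r) hc

lemma aux_int_q (β : ℝ) (hβ1 : β < 1) :
    Integrable ((Ioc (0:ℝ) 1).indicator fun r => r ^ (-β)) := by
  rw [integrable_indicator_iff measurableSet_Ioc]
  have h := intervalIntegral.intervalIntegrable_rpow' (r := -β) (by linarith) (a := 0) (b := 1)
  rw [intervalIntegrable_iff, uIoc_of_le zero_le_one] at h
  exact h

lemma aux_q_nonneg (β : ℝ) (r : ℝ) : 0 ≤ (Ioc (0:ℝ) 1).indicator (fun r => r ^ (-β)) r :=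
  Set.indicator_nonneg (fun y hy => Real.rpow_nonneg hy.1.le _) r

lemma aux_int_f0 (c b β : ℝ) (hc : 0 ≤ c) (hβ0 : 0 ≤ β) (hβ1 : β < 1) :
    Integrable (fun r : ℝ => min 1 (c * ((b - r)⁻¹)^2) * (1 + |r| ^ (-β))) := by
  set q := (Ioc (0:ℝ) 1).indicator (fun r : ℝ => r ^ (-β)) with hqdef
  have hq : Integrable q := aux_int_q β hβ1
  have hq' : Integrable (fun r => q (-r)) := hq.comp_neg
  have hdom : Integrable
      (fun r : ℝ => 2 * ((1+c) * (1 + (b - r)^2)⁻¹) + (q r + q (-r))) :=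
    (((integrable_inv_one_add_sq.comp_sub_left b).const_mul (1+c)).const_mul 2).add (hq.add hq')
  refine hdom.mono' ?_ ?_
  · apply Measurable.aestronglyMeasurable
    fun_prop
  · have ae0 : ∀ᵐ r : ℝ, r ≠ 0 := by
      refine compl_mem_ae_iff.mpr ?_
      exact measure_mono_null (fun r hr => hr) (measure_singleton (0:ℝ))
    filter_upwards [ae0] with r hr
    have h1β : (0:ℝ) ≤ |r| ^ (-β) := Real.rpow_nonneg (abs_nonneg r) _
    have hk0 : 0 ≤ min 1 (c * ((b - r)⁻¹)^2) := aux_min_nonneg c _ hc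
    have hk1 : min 1 (c * ((b - r)⁻¹)^2) ≤ 1 := min_le_left _ _
    have hkD : min 1 (c * ((b - r)⁻¹)^2) ≤ (1+c) * (1 + (b - r)^2)⁻¹ := aux_bound c _ hc
    rw [Real.norm_eq_abs, abs_of_nonneg (by positivity)]
    have key : min 1 (c * ((b - r)⁻¹)^2) * |r| ^ (-β)
        ≤ q r + q (-r) + (1+c) * (1 + (b - r)^2)⁻¹ := by
      rcases le_or_gt |r| 1 with h|h
      · have habs : q r + q (-r) = |r| ^ (-β) := by
          rcases lt_or_gt_of_ne hr with hneg | hpos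
          · have h1 : q r = 0 := Set.indicator_of_notMem (by
              simp only [mem_Ioc, not_and_or]; left; linarith) _
            have h2 : q (-r) = (-r) ^ (-β) := Set.indicator_of_mem (by
              constructor <;> [linarith; (rw [abs_of_neg hneg] at h; linarith)]) _
            rw [h1, h2, abs_of_neg hneg]; ring
          · have h1 : q r = r ^ (-β) := Set.indicator_of_mem (by
              constructor <;> [linarith; (rw [abs_of_pos hpos] at h; linarith)]) _
            have h2 : q (-r) = 0 := Set.indicator_of_notMem (by
              simp only [mem_Ioc, not_and_or]; left; linarith) _
            rw [h1, h2, abs_of_pos hpos]; ring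
        calc min 1 (c * ((b - r)⁻¹)^2) * |r| ^ (-β) ≤ 1 * |r| ^ (-β) :=
              mul_le_mul_of_nonneg_right hk1 h1β
        _ = q r + q (-r) := by rw [one_mul, habs]
        _ ≤ q r + q (-r) + (1+c) * (1 + (b - r)^2)⁻¹ := le_add_of_nonneg_right (by positivity)
      · have hle1 : |r| ^ (-β) ≤ 1 :=
          Real.rpow_le_one_of_one_le_of_nonpos h.le (neg_nonpos.mpr hβ0)
        have hmain : min 1 (c * ((b - r)⁻¹)^2) * |r| ^ (-β) ≤ (1+c) * (1 + (b - r)^2)⁻¹ := by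
          calc min 1 (c * ((b - r)⁻¹)^2) * |r| ^ (-β) ≤ min 1 (c * ((b - r)⁻¹)^2) * 1 :=
                mul_le_mul_of_nonneg_left hle1 hk0
          _ = min 1 (c * ((b - r)⁻¹)^2) := mul_one _
          _ ≤ _ := hkD
        have hq0 : 0 ≤ q r + q (-r) := add_nonneg (aux_q_nonneg β r) (aux_q_nonneg β (-r))
        linarith
    have expand : min 1 (c * ((b - r)⁻¹)^2) * (1 + |r| ^ (-β))
        = min 1 (c * ((b - r)⁻¹)^2) + min 1 (c * ((b - r)⁻¹)^2) * |r| ^ (-β) := by ring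
    rw [expand]
    linarith

lemma aux_term_le {d : ℕ} (𝔰 : Fin (d+1) → ℝ) (u : Fin (d+1) → ℝ) (i : Fin (d+1)) :
    |u i| ^ (1/𝔰 i) ≤ sNorm 𝔰 u :=
  Finset.single_le_sum (f := fun j => |u j| ^ (1/𝔰 j))
    (fun j _ => Real.rpow_nonneg (abs_nonneg _) _) (Finset.mem_univ i)

lemma sNorm_nonneg {d : ℕ} (𝔰 : Fin (d+1) → ℝ) (u : Fin (d+1) → ℝ) : 0 ≤ sNorm 𝔰 u :=
  Finset.sum_nonneg fun j _ => Real.rpow_nonneg (abs_nonneg _) _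

lemma aux_abs_le_pow {s x S : ℝ} (hs : 1 ≤ s) (hS : 0 ≤ S) (h : |x| ^ (1/s) ≤ S) :
    |x| ≤ S ^ s := by
  have hs0 : s ≠ 0 := by linarith
  have h2 : (|x| ^ (1/s)) ^ s ≤ S ^ s :=
    Real.rpow_le_rpow (Real.rpow_nonneg (abs_nonneg _) _) h (by linarith)
  rwa [← Real.rpow_mul (abs_nonneg x), one_div_mul_cancel hs0, Real.rpow_one] at h2

lemma aux_rpow_sum {ι : Type*} (s : Finset ι) (S : ℝ) (hS : 0 < S) (f : ι → ℝ) :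
    S ^ (∑ i ∈ s, f i) = ∏ i ∈ s, S ^ f i := by
  rw [Real.rpow_def_of_pos hS, Finset.mul_sum, Real.exp_sum]
  exact Finset.prod_congr rfl fun i _ => (Real.rpow_def_of_pos hS _).symm

lemma aux_claimA_one {d : ℕ} (𝔰 : Fin (d+1) → ℝ) (h𝔰 : ∀ i, 1 ≤ 𝔰 i) (u : Fin (d+1) → ℝ)
    (hu : ∀ i, u i ≠ 0) (hS : sNorm 𝔰 u ≤ 1) :
    ∏ i, min 1 ((|u i|)⁻¹^2) = 1 := by
  refine Finset.prod_eq_one fun i _ => ?_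
  have h1 : |u i| ≤ 1 := by
    have := aux_abs_le_pow (h𝔰 i) zero_le_one (le_trans (aux_term_le 𝔰 u i) hS)
    rwa [Real.one_rpow] at this
  have h2 : 0 < |u i| := abs_pos.mpr (hu i)
  have h3 : 1 ≤ |u i|⁻¹ := by
    have := inv_anti₀ h2 h1
    simpa using this
  exact min_eq_left (by nlinarith)

lemma aux_claimA_prod {d : ℕ} (𝔰 : Fin (d+1) → ℝ) (h𝔰 : ∀ i, 1 ≤ 𝔰 i) (u : Fin (d+1) → ℝ)
    (hu : ∀ i, u i ≠ 0) (hS : 1 < sNorm 𝔰 u) :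
    sNorm 𝔰 u ^ (-(∑ i : Fin (d+1), 2 * 𝔰 i)) ≤ ∏ i, min 1 ((|u i|)⁻¹^2) := by
  have hS0 : 0 < sNorm 𝔰 u := lt_trans one_pos hS
  rw [show -(∑ i : Fin (d+1), 2*𝔰 i) = ∑ i : Fin (d+1), -(2*𝔰 i) by
    rw [← Finset.sum_neg_distrib], aux_rpow_sum _ _ hS0]
  refine Finset.prod_le_prod (fun i _ => Real.rpow_nonneg hS0.le _) (fun i _ => ?_)
  refine le_min (Real.rpow_le_one_of_one_le_of_nonpos hS.le (by have := h𝔰 i; linarith)) ?_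
  have h1 : |u i| ≤ sNorm 𝔰 u ^ 𝔰 i := aux_abs_le_pow (h𝔰 i) hS0.le (aux_term_le 𝔰 u i)
  have h2 : 0 < |u i| := abs_pos.mpr (hu i)
  have h3 : sNorm 𝔰 u ^ (-(2*𝔰 i)) = ((sNorm 𝔰 u ^ 𝔰 i)^2)⁻¹ := by
    rw [Real.rpow_neg hS0.le]
    congr 1
    rw [show (2:ℝ)*𝔰 i = 𝔰 i * 2 by ring, Real.rpow_mul hS0.le,
      show ((2:ℝ)) = ((2:ℕ):ℝ) by norm_num, Real.rpow_natCast]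
  rw [h3, inv_pow]
  exact inv_anti₀ (by positivity) (pow_le_pow_left₀ h2.le h1 2)

lemma aux_phi_bound {d : ℕ} (𝔰 : Fin (d+1) → ℝ) (h𝔰0 : 0 < 𝔰 0) (e : ℝ) (he : e ≤ 0)
    (y : Fin (d+1) → ℝ) :
    phi 𝔰 y ^ e ≤ 1 + |y 0| ^ (e / 𝔰 0) := by
  have hnn : 0 ≤ |y 0| ^ (e / 𝔰 0) := Real.rpow_nonneg (abs_nonneg _) _
  rcases le_total 1 (|y 0| ^ (1/𝔰 0)) with h | h
  · rw [phi, min_eq_right h, Real.one_rpow]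
    linarith
  · rw [phi, min_eq_left h, ← Real.rpow_mul (abs_nonneg _),
      show (1/𝔰 0) * e = e / 𝔰 0 by ring]
    linarith

end Aux

set_option maxHeartbeats 1200000 in
/-- uniqueness part of Theorem 3.7, germ formulation. -/
theorem singular_reconstruction_unique
    {d : ℕ} (𝔰 : Fin (d + 1) → ℝ) (h𝔰 : ∀ i, 1 ≤ 𝔰 i) (ℓ : ℝ) (hℓ : 0 < ℓ)
    (G : (Fin (d + 1) → ℝ) → ℝ) (hGmeas : Measurable G) (hGnonneg : ∀ x, 0 ≤ G x)
    (w wStar v vStar : (Fin (d + 1) → ℝ) → ℝ)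
    (hw : GControlled 𝔰 ℓ G w wStar) (hv : GControlled 𝔰 ℓ G v vStar)
    (hwv : GControlled 𝔰 ℓ G (fun x => w x * v x) (fun x => wStar x * vStar x))
    (Q : ℝ → (Fin (d + 1) → ℝ) → (Fin (d + 1) → ℝ) → ℝ) (hQ : GSemigroup 𝔰 ℓ G Q)
    (γ η : ℝ) (hγ : 0 < γ) (hη1 : γ - 𝔰 0 < η) (hη2 : η ≤ γ)
    (A : Finset ℝ) (hA : A.Nonempty) (hAγ : ∀ a ∈ A, a < γ)
    (F : (Fin (d + 1) → ℝ) → (Fin (d + 1) → ℝ) → ℝ)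
    (hFcont : ∀ x, Continuous (F x))
    (D₁ D₂ : ℝ) (hD₁ : 0 ≤ D₁) (hD₂ : 0 ≤ D₂)
    (hsize : ∀ t ∈ Set.Ioc (0 : ℝ) 1, ∀ x : Fin (d + 1) → ℝ, x 0 ≠ 0 →
      w x * v x * |∫ z, Q t x z * F x z|
        ≤ D₁ * ∑ a ∈ A, t ^ (a / ℓ) * phi 𝔰 x ^ min (η - a) 0)
    (hcoh : ∀ t ∈ Set.Ioc (0 : ℝ) 1, ∀ x y : Fin (d + 1) → ℝ, x 0 ≠ 0 → y 0 ≠ 0 →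
      w y * v y * |∫ z, Q t x z * (F y z - F x z)|
        ≤ D₂ * (wStar (y - x) * vStar (y - x)) *
            ∑ a ∈ A, t ^ (a / ℓ) * phi2 𝔰 x y ^ (η - γ) * sNorm 𝔰 (y - x) ^ (γ - a))
    (Λ₁ Λ₂ : ℝ → (Fin (d + 1) → ℝ) → ℝ)
    (h₁cont : ∀ t : ℝ, 0 < t → Continuous (Λ₁ t))
    (h₂cont : ∀ t : ℝ, 0 < t → Continuous (Λ₂ t))
    (h₁sg : ∀ s t : ℝ, 0 < s → 0 < t → ∀ x, (∫ y, Q s x y * Λ₁ t y) = Λ₁ (t + s) x)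
    (h₂sg : ∀ s t : ℝ, 0 < s → 0 < t → ∀ x, (∫ y, Q s x y * Λ₂ t y) = Λ₂ (t + s) x)
    (h₁bdd : (⨆ t ∈ Set.Ioc (0 : ℝ) 1, wNorm (fun z => w z * v z) (Λ₁ t)) < ⊤)
    (h₂bdd : (⨆ t ∈ Set.Ioc (0 : ℝ) 1, wNorm (fun z => w z * v z) (Λ₂ t)) < ⊤)
    (K : ℝ) (hK : 0 ≤ K)
    (h₁rec : ∀ t ∈ Set.Ioc (0 : ℝ) 1, ∀ x : Fin (d + 1) → ℝ, x 0 ≠ 0 →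
      w x * v x * |Λ₁ t x - ∫ z, Q t x z * F x z|
        ≤ K * t ^ (γ / ℓ) * phi 𝔰 x ^ (η - γ))
    (h₂rec : ∀ t ∈ Set.Ioc (0 : ℝ) 1, ∀ x : Fin (d + 1) → ℝ, x 0 ≠ 0 →
      w x * v x * |Λ₂ t x - ∫ z, Q t x z * F x z|
        ≤ K * t ^ (γ / ℓ) * phi 𝔰 x ^ (η - γ)) :
    ∀ t : ℝ, 0 < t → Λ₁ t = Λ₂ t := by
  classical
  obtain ⟨C₁, hC₁pos, hC₁⟩ := hQ.upper
  have h𝔰0 : ∀ i, (0:ℝ) < 𝔰 i := fun i => lt_of_lt_of_le one_pos (h𝔰 i)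
  have hWVpos : ∀ z, 0 < w z * v z := fun z => mul_pos (hw.pos z) (hv.pos z)
  -- uniform bound M on the weighted sup norms
  have hMext : ∀ (Λ : ℝ → (Fin (d + 1) → ℝ) → ℝ),
      (⨆ t ∈ Set.Ioc (0 : ℝ) 1, wNorm (fun z => w z * v z) (Λ t)) < ⊤ →
      ∀ s ∈ Set.Ioc (0:ℝ) 1, ∀ y, |Λ s y| * (w y * v y) ≤
        (⨆ t ∈ Set.Ioc (0 : ℝ) 1, wNorm (fun z => w z * v z) (Λ t)).toReal := by
    intro Λ hbdd s hs y
    have h1 : ENNReal.ofReal (|Λ s y| * (w y * v y)) ≤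
        ⨆ t ∈ Set.Ioc (0 : ℝ) 1, wNorm (fun z => w z * v z) (Λ t) := by
      refine le_trans ?_ (le_biSup _ hs)
      rw [wNorm]
      exact le_iSup (fun z => ENNReal.ofReal (|Λ s z| * (w z * v z))) y
    exact (ENNReal.ofReal_le_iff_le_toReal hbdd.ne).mp h1
  set M : ℝ := max (max
      (⨆ t ∈ Set.Ioc (0 : ℝ) 1, wNorm (fun z => w z * v z) (Λ₁ t)).toReal
      (⨆ t ∈ Set.Ioc (0 : ℝ) 1, wNorm (fun z => w z * v z) (Λ₂ t)).toReal) 0 with hMdef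
  have hM0 : 0 ≤ M := le_max_right _ _
  have hM1 : ∀ s ∈ Set.Ioc (0:ℝ) 1, ∀ y, |Λ₁ s y| * (w y * v y) ≤ M := fun s hs y =>
    le_trans (hMext Λ₁ h₁bdd s hs y) (le_max_of_le_left (le_max_left _ _))
  have hM2 : ∀ s ∈ Set.Ioc (0:ℝ) 1, ∀ y, |Λ₂ s y| * (w y * v y) ≤ M := fun s hs y =>
    le_trans (hMext Λ₂ h₂bdd s hs y) (le_max_of_le_left (le_max_right _ _))
  intro t ht
  funext x
  -- parameters
  set β : ℝ := (γ - η) / 𝔰 0 with hβ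
  have hβ0 : 0 ≤ β := div_nonneg (by linarith) (h𝔰0 0).le
  have hβ1 : β < 1 := (div_lt_one (h𝔰0 0)).mpr (by linarith)
  set c : Fin (d+1) → ℝ := fun i => (t ^ (𝔰 i / ℓ))^2 with hc
  have hcpos : ∀ i, 0 ≤ c i := fun i => sq_nonneg _
  -- the dominating product function
  set f : Fin (d+1) → ℝ → ℝ :=
    fun i r => min 1 (c i * ((x i - r)⁻¹)^2) * (if i = 0 then 1 + |r| ^ (-β) else 1)
    with hfdef
  have hf_int : ∀ i, Integrable (f i) := by
    intro i
    by_cases h0 : i = 0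
    · subst h0
      simpa [hfdef] using aux_int_f0 (c 0) (x 0) β (hcpos 0) hβ0 hβ1
    · simpa [hfdef, h0] using aux_int_min (c i) (x i) (hcpos i)
  have hg_int : Integrable (fun y : Fin (d+1) → ℝ => ∏ i, f i (y i)) :=
    Integrable.fintype_prod (𝕜 := ℝ) hf_int
  have hf_nonneg : ∀ i r, 0 ≤ f i r := by
    intro i r
    refine mul_nonneg (aux_min_nonneg _ _ (hcpos i)) ?_
    split
    · positivity
    · norm_num
  have hg_nonneg : ∀ y : Fin (d+1) → ℝ, 0 ≤ ∏ i, f i (y i) :=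
    fun y => Finset.prod_nonneg fun i _ => hf_nonneg i (y i)
  have hprod_nonneg : ∀ y : Fin (d+1) → ℝ, 0 ≤ ∏ i, min 1 (c i * ((x i - y i)⁻¹)^2) :=
    fun y => Finset.prod_nonneg fun i _ => aux_min_nonneg _ _ (hcpos i)
  have hg_eq : ∀ y : Fin (d+1) → ℝ,
      (∏ i, f i (y i)) = (∏ i, min 1 (c i * ((x i - y i)⁻¹)^2)) * (1 + |y 0| ^ (-β)) := by
    intro y
    rw [hfdef, Finset.prod_mul_distrib]
    congr 1
    rw [Finset.prod_ite_eq' Finset.univ (0 : Fin (d+1)) (fun i => 1 + |y i| ^ (-β))]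
    simp
  -- moment constants
  have hnn0 : (0:ℝ) ≤ ∑ i : Fin (d+1), 2 * 𝔰 i :=
    Finset.sum_nonneg fun i _ => by have := h𝔰0 i; linarith
  obtain ⟨B, hB⟩ := hwv.moment (∑ i, 2 * 𝔰 i) hnn0 t ht
  obtain ⟨B₀, hB₀⟩ := hwv.moment 0 le_rfl t ht
  set BB : ℝ := max B 0 + max B₀ 0 with hBBdef
  have hBB0 : (0:ℝ) ≤ BB := by positivity
  -- Claim A
  have claimA : ∀ τ ∈ Set.Ioc (0:ℝ) t, ∀ u : Fin (d+1) → ℝ, (∀ i, u i ≠ 0) →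
      wStar (fun i => τ ^ (𝔰 i / ℓ) * u i) * vStar (fun i => τ ^ (𝔰 i / ℓ) * u i) * G u
        ≤ BB * ∏ i, min 1 ((|u i|)⁻¹^2) := by
    intro τ hτ u hu
    have hWG0 : 0 ≤ wStar (fun i => τ ^ (𝔰 i / ℓ) * u i) *
        vStar (fun i => τ ^ (𝔰 i / ℓ) * u i) * G u :=
      mul_nonneg (mul_nonneg (le_trans zero_le_one (hw.one_le_star _))
        (le_trans zero_le_one (hv.one_le_star _))) (hGnonneg u)
    have hB₀' : wStar (fun i => τ ^ (𝔰 i / ℓ) * u i) *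
        vStar (fun i => τ ^ (𝔰 i / ℓ) * u i) * G u ≤ max B₀ 0 := by
      have h := hB₀ τ hτ u
      rw [Real.rpow_zero, one_mul] at h
      exact le_trans (le_of_eq (by ring)) (le_trans h (le_max_left _ _))
    rcases le_or_gt (sNorm 𝔰 u) 1 with hS | hS
    · rw [aux_claimA_one 𝔰 h𝔰 u hu hS, mul_one]
      calc _ ≤ max B₀ 0 := hB₀'
      _ ≤ BB := le_add_of_nonneg_left (le_max_right _ _)
    · have hSpos : 0 < sNorm 𝔰 u := lt_trans one_pos hS
      have hkey := hB τ hτ u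
      have hSn : 0 < sNorm 𝔰 u ^ (∑ i : Fin (d+1), 2*𝔰 i) := Real.rpow_pos_of_pos hSpos _
      have h2 : wStar (fun i => τ ^ (𝔰 i / ℓ) * u i) *
          vStar (fun i => τ ^ (𝔰 i / ℓ) * u i) * G u
          ≤ max B 0 * (sNorm 𝔰 u ^ (∑ i : Fin (d+1), 2*𝔰 i))⁻¹ := by
        rw [← div_eq_mul_inv, le_div_iff₀ hSn]
        calc wStar (fun i => τ ^ (𝔰 i / ℓ) * u i) *
            vStar (fun i => τ ^ (𝔰 i / ℓ) * u i) * G u * sNorm 𝔰 u ^ (∑ i : Fin (d+1), 2*𝔰 i)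
            = sNorm 𝔰 u ^ (∑ i : Fin (d+1), 2*𝔰 i) *
              (wStar (fun i => τ ^ (𝔰 i / ℓ) * u i) * vStar (fun i => τ ^ (𝔰 i / ℓ) * u i)) *
              G u := by ring
        _ ≤ B := hkey
        _ ≤ max B 0 := le_max_left _ _
      refine le_trans h2 (mul_le_mul (le_add_of_nonneg_right (le_max_right _ _)) ?_
        (inv_nonneg.mpr hSn.le) hBB0)
      rw [← Real.rpow_neg hSpos.le]
      exact aux_claimA_prod 𝔰 h𝔰 u hu hS
  -- kernel bound
  have hSsum : (0:ℝ) < ∑ i : Fin (d+1), 𝔰 i :=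
    Finset.sum_pos (fun i _ => h𝔰0 i) Finset.univ_nonempty
  set Cg : ℝ := C₁ * (t/2) ^ (-(∑ i : Fin (d+1), 𝔰 i) / ℓ) * BB with hCgdef
  have hCg0 : 0 ≤ Cg := by
    refine mul_nonneg (mul_nonneg hC₁pos.le (Real.rpow_nonneg (by linarith) _)) hBB0
  have kernel : ∀ τ : ℝ, t/2 ≤ τ → τ ≤ t → ∀ y : Fin (d+1) → ℝ, (∀ i, y i ≠ x i) →
      |Q τ x y| * (wStar (x - y) * vStar (x - y))
        ≤ Cg * ∏ i, min 1 (c i * ((x i - y i)⁻¹)^2) := by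
    intro τ hτ1 hτ2 y hy
    have hτpos : 0 < τ := lt_of_lt_of_le (half_pos ht) hτ1
    set u : Fin (d+1) → ℝ := fun i => τ ^ (-𝔰 i / ℓ) * (x i - y i) with hu
    have hu0 : ∀ i, u i ≠ 0 := fun i =>
      mul_ne_zero (ne_of_gt (Real.rpow_pos_of_pos hτpos _))
        (sub_ne_zero.mpr fun h => hy i h.symm)
    have hGt : Gt 𝔰 ℓ G τ (x - y) = τ ^ (-(∑ i : Fin (d+1), 𝔰 i) / ℓ) * G u := rfl
    have hxy : (x - y) = fun i => τ ^ (𝔰 i / ℓ) * u i := by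
      funext i
      have hτ1' : τ ^ (𝔰 i / ℓ) * τ ^ (-𝔰 i / ℓ) = 1 := by
        rw [← Real.rpow_add hτpos, show 𝔰 i / ℓ + -𝔰 i / ℓ = 0 by ring, Real.rpow_zero]
      calc (x - y) i = x i - y i := rfl
      _ = (τ ^ (𝔰 i / ℓ) * τ ^ (-𝔰 i / ℓ)) * (x i - y i) := by rw [hτ1', one_mul]
      _ = τ ^ (𝔰 i / ℓ) * (τ ^ (-𝔰 i / ℓ) * (x i - y i)) := by ring
    have hQb := hC₁ τ hτpos x y
    have hA' := claimA τ ⟨hτpos, hτ2⟩ u hu0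
    rw [← hxy] at hA'
    have hfac : ∀ i, min 1 ((|u i|)⁻¹^2) ≤ min 1 (c i * ((x i - y i)⁻¹)^2) := by
      intro i
      have h1 : |u i| = τ ^ (-𝔰 i/ℓ) * |x i - y i| := by
        rw [hu, abs_mul, abs_of_pos (Real.rpow_pos_of_pos hτpos _)]
      have h2 : (|u i|)⁻¹ = τ ^ (𝔰 i/ℓ) * |x i - y i|⁻¹ := by
        rw [h1, mul_inv, ← Real.rpow_neg hτpos.le,
          show -(-𝔰 i/ℓ) = 𝔰 i/ℓ by ring]
      have h3 : ((|u i|)⁻¹)^2 = (τ^(𝔰 i/ℓ))^2 * ((x i - y i)⁻¹)^2 := by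
        rw [h2, mul_pow]
        congr 1
        rw [inv_pow, sq_abs, inv_pow]
      refine min_le_min le_rfl ?_
      rw [h3, hc]
      refine mul_le_mul_of_nonneg_right ?_ (by positivity)
      have hle : τ ^ (𝔰 i/ℓ) ≤ t ^ (𝔰 i/ℓ) :=
        Real.rpow_le_rpow hτpos.le hτ2 (div_nonneg (h𝔰0 i).le hℓ.le)
      exact pow_le_pow_left₀ (Real.rpow_nonneg hτpos.le _) hle 2
    have prod_le : (∏ i, min 1 ((|u i|)⁻¹^2)) ≤ ∏ i, min 1 (c i * ((x i - y i)⁻¹)^2) :=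
      Finset.prod_le_prod (fun i _ => le_min zero_le_one (by positivity)) (fun i _ => hfac i)
    have hexp0 : -(∑ i : Fin (d+1), 𝔰 i) / ℓ ≤ 0 := by
      rw [neg_div]
      exact neg_nonpos.mpr (div_nonneg hSsum.le hℓ.le)
    have hpow : τ ^ (-(∑ i : Fin (d+1), 𝔰 i) / ℓ) ≤ (t/2) ^ (-(∑ i : Fin (d+1), 𝔰 i) / ℓ) :=
      Real.rpow_le_rpow_of_nonpos (half_pos ht) hτ1 hexp0
    have hwsvs0 : 0 ≤ wStar (x - y) * vStar (x - y) :=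
      mul_nonneg (le_trans zero_le_one (hw.one_le_star _)) (le_trans zero_le_one (hv.one_le_star _))
    calc |Q τ x y| * (wStar (x - y) * vStar (x - y))
        ≤ (C₁ * Gt 𝔰 ℓ G τ (x - y)) * (wStar (x - y) * vStar (x - y)) :=
          mul_le_mul_of_nonneg_right hQb hwsvs0
      _ = C₁ * τ ^ (-(∑ i : Fin (d+1), 𝔰 i) / ℓ) *
          (wStar (x - y) * vStar (x - y) * G u) := by rw [hGt]; ring
      _ ≤ C₁ * τ ^ (-(∑ i : Fin (d+1), 𝔰 i) / ℓ) *
          (BB * ∏ i, min 1 ((|u i|)⁻¹^2)) := by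
          refine mul_le_mul_of_nonneg_left hA' ?_
          exact mul_nonneg hC₁pos.le (Real.rpow_nonneg hτpos.le _)
      _ ≤ C₁ * (t/2) ^ (-(∑ i : Fin (d+1), 𝔰 i) / ℓ) *
          (BB * ∏ i, min 1 (c i * ((x i - y i)⁻¹)^2)) := by
          refine mul_le_mul (mul_le_mul_of_nonneg_left hpow hC₁pos.le)
            (mul_le_mul_of_nonneg_left prod_le hBB0) ?_ ?_
          · refine mul_nonneg hBB0 (Finset.prod_nonneg fun i _ => le_min zero_le_one (by positivity))
          · exact mul_nonneg hC₁pos.le (Real.rpow_nonneg (by linarith) _)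
      _ = Cg * ∏ i, min 1 (c i * ((x i - y i)⁻¹)^2) := by rw [hCgdef]; ring
  -- a.e. avoidance of hyperplanes
  have hae : ∀ᵐ y : (Fin (d+1) → ℝ), (∀ i, y i ≠ x i) ∧ y 0 ≠ 0 := by
    have h1 : ∀ i : Fin (d+1), ∀ᵐ y : (Fin (d+1) → ℝ), y i ≠ x i := by
      intro i
      have := MeasureTheory.Measure.ae_eval_ne (fun _ : Fin (d+1) => (volume : Measure ℝ)) i (x i)
      rwa [← volume_pi] at this
    have h2 : ∀ᵐ y : (Fin (d+1) → ℝ), y 0 ≠ 0 := by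
      have := MeasureTheory.Measure.ae_eval_ne (fun _ : Fin (d+1) => (volume : Measure ℝ)) 0 (0:ℝ)
      rwa [← volume_pi] at this
    exact (ae_all_iff.mpr h1).and h2
  -- weight comparison
  have hinv : ∀ y : Fin (d+1) → ℝ,
      (w y * v y)⁻¹ ≤ (wStar (x - y) * vStar (x - y)) * (w x * v x)⁻¹ := by
    intro y
    refine aux_inv_le (hWVpos x) (hWVpos y) ?_
    have := hwv.submul (x - y) y
    simpa [sub_add_cancel] using this
  -- main quantitative estimate
  have est : ∀ s : ℝ, 0 < s → s ≤ min (t/2) 1 →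
      |Λ₁ t x - Λ₂ t x| ≤
        (2*K*Cg*(w x * v x)⁻¹ * ∫ y : Fin (d+1) → ℝ, ∏ i, f i (y i)) * s ^ (γ/ℓ) := by
    intro s hs hs'
    have hs1 : s ≤ 1 := le_trans hs' (min_le_right _ _)
    have hst : s ≤ t/2 := le_trans hs' (min_le_left _ _)
    have hτpos : 0 < t - s := by linarith [half_pos ht, half_lt_self ht]
    have hτ1 : t/2 ≤ t - s := by linarith
    have hτ2 : t - s ≤ t := by linarith
    have hQcont : Continuous fun y => Q (t - s) x y :=
      (hQ.cont (t - s) hτpos).comp (continuous_const.prodMk continuous_id)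
    have hIntegr : ∀ (Λ : ℝ → (Fin (d + 1) → ℝ) → ℝ), Continuous (Λ s) →
        (∀ y, |Λ s y| * (w y * v y) ≤ M) →
        Integrable (fun y => Q (t - s) x y * Λ s y) := by
      intro Λ hcont hbdd
      refine (hg_int.const_mul (M * Cg * (w x * v x)⁻¹)).mono'
        ((hQcont.mul hcont).aestronglyMeasurable) ?_
      filter_upwards [hae] with y hy
      obtain ⟨hy1, _⟩ := hy
      have hQk := kernel (t - s) hτ1 hτ2 y hy1
      have hΛ : |Λ s y| ≤ M * (w y * v y)⁻¹ := by
        rw [← div_eq_mul_inv, le_div_iff₀ (hWVpos y)]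
        exact hbdd y
      have hstep : (∏ i, min 1 (c i * ((x i - y i)⁻¹)^2)) ≤ ∏ i, f i (y i) := by
        rw [hg_eq y]
        exact le_mul_of_one_le_right (hprod_nonneg y)
          (le_add_of_nonneg_right (Real.rpow_nonneg (abs_nonneg _) _))
      rw [Real.norm_eq_abs, abs_mul]
      calc |Q (t - s) x y| * |Λ s y|
          ≤ |Q (t - s) x y| * (M * (w y * v y)⁻¹) :=
            mul_le_mul_of_nonneg_left hΛ (abs_nonneg _)
        _ = M * (|Q (t - s) x y| * (w y * v y)⁻¹) := by ring
        _ ≤ M * (|Q (t - s) x y| * ((wStar (x - y) * vStar (x - y)) * (w x * v x)⁻¹)) :=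
            mul_le_mul_of_nonneg_left
              (mul_le_mul_of_nonneg_left (hinv y) (abs_nonneg _)) hM0
        _ = (|Q (t - s) x y| * (wStar (x - y) * vStar (x - y))) * (M * (w x * v x)⁻¹) := by
            ring
        _ ≤ (Cg * ∏ i, min 1 (c i * ((x i - y i)⁻¹)^2)) * (M * (w x * v x)⁻¹) :=
            mul_le_mul_of_nonneg_right hQk
              (mul_nonneg hM0 (inv_nonneg.mpr (hWVpos x).le))
        _ = M * Cg * (w x * v x)⁻¹ * (∏ i, min 1 (c i * ((x i - y i)⁻¹)^2)) := by ring
        _ ≤ M * Cg * (w x * v x)⁻¹ * (∏ i, f i (y i)) := by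
            refine mul_le_mul_of_nonneg_left hstep ?_
            exact mul_nonneg (mul_nonneg hM0 hCg0) (inv_nonneg.mpr (hWVpos x).le)
    have hint1 : Integrable (fun y => Q (t - s) x y * Λ₁ s y) :=
      hIntegr Λ₁ (h₁cont s hs) (fun y => hM1 s ⟨hs, hs1⟩ y)
    have hint2 : Integrable (fun y => Q (t - s) x y * Λ₂ s y) :=
      hIntegr Λ₂ (h₂cont s hs) (fun y => hM2 s ⟨hs, hs1⟩ y)
    have hE : Λ₁ t x - Λ₂ t x = ∫ y, (Q (t - s) x y * Λ₁ s y - Q (t - s) x y * Λ₂ s y) := by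
      rw [integral_sub hint1 hint2, h₁sg (t - s) s hτpos hs x, h₂sg (t - s) s hτpos hs x,
        show s + (t - s) = t by ring]
    have hsγ : (0:ℝ) ≤ s ^ (γ/ℓ) := Real.rpow_nonneg hs.le _
    have hdiffb : ∀ᵐ y : (Fin (d+1) → ℝ), ‖Q (t - s) x y * Λ₁ s y - Q (t - s) x y * Λ₂ s y‖
        ≤ (2*K*Cg*(w x * v x)⁻¹ * s ^ (γ/ℓ)) * (∏ i, f i (y i)) := by
      filter_upwards [hae] with y hy
      obtain ⟨hy1, hy2⟩ := hy
      have hQk := kernel (t - s) hτ1 hτ2 y hy1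
      -- reconstruction difference bound
      have hrec : |Λ₁ s y - Λ₂ s y| * (w y * v y) ≤ 2*K*s^(γ/ℓ)*(1 + |y 0| ^ (-β)) := by
        have h1 := h₁rec s ⟨hs, hs1⟩ y hy2
        have h2 := h₂rec s ⟨hs, hs1⟩ y hy2
        have htri : |Λ₁ s y - Λ₂ s y| ≤
            |Λ₁ s y - ∫ z, Q s y z * F y z| + |Λ₂ s y - ∫ z, Q s y z * F y z| := by
          have := abs_sub_le (Λ₁ s y) (∫ z, Q s y z * F y z) (Λ₂ s y)
          rwa [abs_sub_comm (∫ z, Q s y z * F y z) (Λ₂ s y)] at this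
        have hφ : phi 𝔰 y ^ (η - γ) ≤ 1 + |y 0| ^ (-β) := by
          have := aux_phi_bound 𝔰 (h𝔰0 0) (η - γ) (by linarith) y
          rwa [show (η - γ) / 𝔰 0 = -β by rw [hβ]; ring] at this
        have hKs : 0 ≤ K * s ^ (γ/ℓ) := mul_nonneg hK hsγ
        have hwv' : 0 < w y * v y := hWVpos y
        calc |Λ₁ s y - Λ₂ s y| * (w y * v y)
            ≤ (|Λ₁ s y - ∫ z, Q s y z * F y z| + |Λ₂ s y - ∫ z, Q s y z * F y z|) *
              (w y * v y) := mul_le_mul_of_nonneg_right htri hwv'.le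
          _ = w y * v y * |Λ₁ s y - ∫ z, Q s y z * F y z| +
              w y * v y * |Λ₂ s y - ∫ z, Q s y z * F y z| := by ring
          _ ≤ K * s ^ (γ / ℓ) * phi 𝔰 y ^ (η - γ) + K * s ^ (γ / ℓ) * phi 𝔰 y ^ (η - γ) :=
              add_le_add h1 h2
          _ = 2 * (K * s ^ (γ / ℓ)) * phi 𝔰 y ^ (η - γ) := by ring
          _ ≤ 2 * (K * s ^ (γ / ℓ)) * (1 + |y 0| ^ (-β)) := by
              refine mul_le_mul_of_nonneg_left hφ (by linarith)
          _ = 2*K*s^(γ/ℓ)*(1 + |y 0| ^ (-β)) := by ring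
      have hrec' : |Λ₁ s y - Λ₂ s y| ≤ 2*K*s^(γ/ℓ)*(1 + |y 0| ^ (-β)) * (w y * v y)⁻¹ := by
        rw [← div_eq_mul_inv, le_div_iff₀ (hWVpos y)]
        exact hrec
      have h1β : (0:ℝ) ≤ 1 + |y 0| ^ (-β) :=
        add_nonneg zero_le_one (Real.rpow_nonneg (abs_nonneg _) _)
      rw [Real.norm_eq_abs, ← mul_sub, abs_mul]
      calc |Q (t - s) x y| * |Λ₁ s y - Λ₂ s y|
          ≤ |Q (t - s) x y| * (2*K*s^(γ/ℓ)*(1 + |y 0| ^ (-β)) * (w y * v y)⁻¹) :=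
            mul_le_mul_of_nonneg_left hrec' (abs_nonneg _)
        _ = (2*K*s^(γ/ℓ)*(1 + |y 0| ^ (-β))) * (|Q (t - s) x y| * (w y * v y)⁻¹) := by ring
        _ ≤ (2*K*s^(γ/ℓ)*(1 + |y 0| ^ (-β))) *
            (|Q (t - s) x y| * ((wStar (x - y) * vStar (x - y)) * (w x * v x)⁻¹)) := by
            refine mul_le_mul_of_nonneg_left
              (mul_le_mul_of_nonneg_left (hinv y) (abs_nonneg _)) ?_
            positivity
        _ = (|Q (t - s) x y| * (wStar (x - y) * vStar (x - y))) *
            ((2*K*s^(γ/ℓ)*(1 + |y 0| ^ (-β))) * (w x * v x)⁻¹) := by ring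
        _ ≤ (Cg * ∏ i, min 1 (c i * ((x i - y i)⁻¹)^2)) *
            ((2*K*s^(γ/ℓ)*(1 + |y 0| ^ (-β))) * (w x * v x)⁻¹) := by
            refine mul_le_mul_of_nonneg_right hQk ?_
            have : (0:ℝ) ≤ (w x * v x)⁻¹ := (inv_nonneg.mpr (hWVpos x).le)
            positivity
        _ = (2*K*Cg*(w x * v x)⁻¹ * s ^ (γ/ℓ)) *
            ((∏ i, min 1 (c i * ((x i - y i)⁻¹)^2)) * (1 + |y 0| ^ (-β))) := by ring
        _ = (2*K*Cg*(w x * v x)⁻¹ * s ^ (γ/ℓ)) * (∏ i, f i (y i)) := by rw [hg_eq y]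
    have hnorm := norm_integral_le_of_norm_le
      (hg_int.const_mul (2*K*Cg*(w x * v x)⁻¹ * s ^ (γ/ℓ))) hdiffb
    rw [← hE] at hnorm
    rw [Real.norm_eq_abs] at hnorm
    calc |Λ₁ t x - Λ₂ t x|
        ≤ ∫ y : Fin (d+1) → ℝ, (2*K*Cg*(w x * v x)⁻¹ * s ^ (γ/ℓ)) * (∏ i, f i (y i)) := hnorm
      _ = (2*K*Cg*(w x * v x)⁻¹ * s ^ (γ/ℓ)) * ∫ y : Fin (d+1) → ℝ, ∏ i, f i (y i) :=
          integral_const_mul _ _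
      _ = (2*K*Cg*(w x * v x)⁻¹ * ∫ y : Fin (d+1) → ℝ, ∏ i, f i (y i)) * s ^ (γ/ℓ) := by ring
  -- conclusion via ε-argument
  set Cfin : ℝ := 2*K*Cg*(w x * v x)⁻¹ * ∫ y : Fin (d+1) → ℝ, ∏ i, f i (y i) with hCfin
  have hint_nonneg : (0:ℝ) ≤ ∫ y : Fin (d+1) → ℝ, ∏ i, f i (y i) := integral_nonneg hg_nonneg
  have hCfin0 : 0 ≤ Cfin := by
    rw [hCfin]
    have : (0:ℝ) ≤ (w x * v x)⁻¹ := inv_nonneg.mpr (hWVpos x).le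
    positivity
  have habs : ∀ ε : ℝ, 0 < ε → |Λ₁ t x - Λ₂ t x| ≤ ε := by
    intro ε hε
    have hCpos : 0 < Cfin + 1 := by linarith
    have hεC : 0 < ε / (Cfin + 1) := div_pos hε hCpos
    set sε : ℝ := (ε/(Cfin+1)) ^ (ℓ/γ) with hsεdef
    have hsε : 0 < sε := Real.rpow_pos_of_pos hεC _
    have hs : 0 < min (min (t/2) 1) sε :=
      lt_min (lt_min (half_pos ht) one_pos) hsε
    have h1 := est (min (min (t/2) 1) sε) hs (min_le_left _ _)
    have h4 : sε ^ (γ/ℓ) = ε/(Cfin+1) := by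
      rw [hsεdef, ← Real.rpow_mul hεC.le, show (ℓ/γ)*(γ/ℓ) = 1 by
        field_simp, Real.rpow_one]
    have h3 : (min (min (t/2) 1) sε) ^ (γ/ℓ) ≤ ε/(Cfin+1) := by
      rw [← h4]
      exact Real.rpow_le_rpow hs.le (min_le_right _ _) (by positivity)
    calc |Λ₁ t x - Λ₂ t x| ≤ Cfin * (min (min (t/2) 1) sε) ^ (γ/ℓ) := h1
      _ ≤ Cfin * (ε/(Cfin+1)) := mul_le_mul_of_nonneg_left h3 hCfin0
      _ ≤ ε := by
          rw [mul_div_assoc'] at *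
          rw [div_le_iff₀ hCpos]
          nlinarith
  have hle : |Λ₁ t x - Λ₂ t x| ≤ 0 := by
    refine le_of_forall_pos_le_add fun ε hε => ?_
    simpa using habs ε hε
  have : Λ₁ t x - Λ₂ t x = 0 := abs_eq_zero.mp (le_antisymm hle (abs_nonneg _))
  linarith
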